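/- For all integers r ≥ 2 and p ≥ 2, one has F(r, p, p) ≤ 2 r^{p-2}. -/

import Mathlib

open Finset

/-- The colors appearing on edges of `K_n` inside the vertex set `S`. -/
def colorsOn {n N : ℕ} (col : Sym2 (Fin n) → Fin N) (S : Finset (Fin n)) : Finset (Fin N) :=
  (S.sym2.filter (fun s => ¬ s.IsDiag)).image col

/-- The generalized Ramsey number `F(r,p,q)`. -/
noncomputable def Fgen (r p q : ℕ) : ℕ :=
  sInf { n : ℕ | ∀ col : Sym2 (Fin n) → Fin r,
    ∃ S : Finset (Fin n), S.card = p ∧ (colorsOn col S).card ≤ q - 1 }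

lemma colorsOn_insert_subset {n N : ℕ} (col : Sym2 (Fin n) → Fin N)
    (v : Fin n) (S : Finset (Fin n)) (c : Fin N)
    (h : ∀ b ∈ S, col (s(v, b)) = c) :
    colorsOn col (insert v S) ⊆ insert c (colorsOn col S) := by
  intro x hx
  simp only [colorsOn, mem_image, mem_filter, Finset.mem_sym2_iff] at hx
  obtain ⟨z, ⟨hz1, hz2⟩, rfl⟩ := hx
  induction z using Sym2.ind with
  | _ a b =>
    have ha := hz1 a (by simp)
    have hb := hz1 b (by simp)
    simp only [mem_insert] at ha hb
    have hab : a ≠ b := by simpa [Sym2.mk_isDiag_iff] using hz2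
    rcases ha with rfl | ha
    · rcases hb with rfl | hb
      · exact absurd rfl hab
      · exact mem_insert.2 (Or.inl (h b hb))
    · rcases hb with rfl | hb
      · have : s(a, b) = s(b, a) := Sym2.eq_swap
        rw [this]
        exact mem_insert.2 (Or.inl (h a ha))
      · refine mem_insert.2 (Or.inr ?_)
        simp only [colorsOn, mem_image, mem_filter, Finset.mem_sym2_iff]
        refine ⟨s(a, b), ⟨fun y hy => ?_, hz2⟩, rfl⟩
        rcases Sym2.mem_iff.1 hy with rfl | rfl
        · exact ha
        · exact hb

lemma key (r : ℕ) (hr : 2 ≤ r) (p : ℕ) (hp : 2 ≤ p) : ∀ n (col : Sym2 (Fin n) → Fin r)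
    (A : Finset (Fin n)), 2 * r ^ (p - 2) ≤ A.card →
    ∃ S : Finset (Fin n), S ⊆ A ∧ S.card = p ∧ (colorsOn col S).card ≤ p - 1 := by
  induction p, hp using Nat.le_induction with
  | base =>
    intro n col A hA
    norm_num at hA
    obtain ⟨a, ha, b, hb, hab⟩ := Finset.one_lt_card.1 hA
    refine ⟨{a, b}, ?_, ?_, ?_⟩
    · intro x hx; rcases mem_insert.1 hx with rfl | hx
      · exact ha
      · rw [mem_singleton.1 hx]; exact hb
    · rw [card_insert_of_notMem (by simpa using hab), card_singleton]
    · have hsub : colorsOn col {a, b} ⊆ {col (s(a, b))} := by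
        intro x hx
        simp only [colorsOn, mem_image, mem_filter, Finset.mem_sym2_iff] at hx
        obtain ⟨z, ⟨hz1, hz2⟩, rfl⟩ := hx
        induction z using Sym2.ind with
        | _ u v =>
          have hu := hz1 u (by simp)
          have hv := hz1 v (by simp)
          simp only [mem_insert, mem_singleton] at hu hv
          have huv : u ≠ v := by simpa [Sym2.mk_isDiag_iff] using hz2
          rcases hu with rfl | rfl <;> rcases hv with rfl | rfl
          · exact absurd rfl huv
          · simp
          · simp [Sym2.eq_swap]
          · exact absurd rfl huv
      calc (colorsOn col {a, b}).card ≤ _ := card_le_card hsub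
        _ ≤ 1 := by simp
  | succ p hp2 ih =>
    intro n col A hA
    have hpow1 : 1 ≤ r ^ (p - 2) := Nat.one_le_pow _ _ (by omega)
    have hps : p + 1 - 2 = (p - 2) + 1 := by omega
    rw [hps, pow_succ] at hA
    -- A.card ≥ 2 * r^(p-2) * r
    have hAne : A.Nonempty := Finset.card_pos.1 (by nlinarith)
    obtain ⟨v, hv⟩ := hAne
    set E := A.erase v with hE
    have hEcard : E.card = A.card - 1 := Finset.card_erase_of_mem hv
    have hpig : ∃ c ∈ (Finset.univ : Finset (Fin r)),
        2 * r ^ (p - 2) - 1 < (E.filter fun b => col (s(v, b)) = c).card := by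
      apply Finset.exists_lt_card_fiber_of_mul_lt_card_of_maps_to
      · intro a _; exact mem_univ _
      · rw [Finset.card_univ, Fintype.card_fin, hEcard]
        have : r * (2 * r ^ (p - 2) - 1) = 2 * (r ^ (p - 2) * r) - r := by
          rw [Nat.mul_sub]; ring_nf
        rw [this]
        have h1 : r ≤ r ^ (p - 2) * r := Nat.le_mul_of_pos_left r hpow1
        omega
    obtain ⟨c, -, hc⟩ := hpig
    set B := E.filter fun b => col (s(v, b)) = c with hB
    have hBcard : 2 * r ^ (p - 2) ≤ B.card := by omega
    obtain ⟨S, hSB, hScard, hScol⟩ := ih n col B hBcard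
    have hSE : S ⊆ E := hSB.trans (filter_subset _ _)
    have hvS : v ∉ S := fun h => (Finset.mem_erase.1 (hSE h)).1 rfl
    refine ⟨insert v S, ?_, ?_, ?_⟩
    · intro x hx; rcases mem_insert.1 hx with rfl | hx
      · exact hv
      · exact (Finset.mem_erase.1 (hSE hx)).2
    · rw [card_insert_of_notMem hvS, hScard]
    · have hconst : ∀ b ∈ S, col (s(v, b)) = c := fun b hb =>
        (Finset.mem_filter.1 (hSB hb)).2
      calc (colorsOn col (insert v S)).card
          ≤ (insert c (colorsOn col S)).card :=
            card_le_card (colorsOn_insert_subset col v S c hconst)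
        _ ≤ (colorsOn col S).card + 1 := card_insert_le _ _
        _ ≤ (p - 1) + 1 := by omega
        _ ≤ p + 1 - 1 := by omega

/-- `F(r, p, p) ≤ 2 r^{p-2}`. -/
theorem stmt16 (r p : ℕ) (hr : 2 ≤ r) (hp : 2 ≤ p) :
    Fgen r p p ≤ 2 * r ^ (p - 2) := by
  apply Nat.sInf_le
  intro col
  obtain ⟨S, -, hcard, hcol⟩ := key r hr p hp (2 * r ^ (p - 2)) col Finset.univ
    (by simp)
  exact ⟨S, hcard, hcol⟩
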